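/- Let D be a 3-coloured tournament in which every vertex is incident with edges of at most two of the three colours, D contains no T_3, no vertex of D monochromatically dominates every other vertex of D, and every proper nonempty subset U of the vertices of D spans a subtournament containing a vertex that monochromatically dominates every other vertex of U within that subtournament. Then D has a directed Hamilton cycle C such that each vertex monochromatically dominates every vertex of D other than itself and its predecessor on C, and no vertex monochromatically dominates its predecessor on C. -/

import Mathlib

/-- A 3-coloured tournament on vertex type `V`: between any two distinct
vertices there is exactly one directed edge (`beats`), and `colour x y` gives
the colour (one of three: red, blue, green) of the edge from `x` to `y`
(meaningful when `beats x y` holds). -/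
structure CTournament (V : Type*) where
  beats : V → V → Prop
  irrefl : ∀ v, ¬ beats v v
  asymm : ∀ v w, beats v w → ¬ beats w v
  total : ∀ v w, v ≠ w → beats v w ∨ beats w v
  colour : V → V → Fin 3

namespace CTournament

/-- The colour red. -/
def red : Fin 3 := 0
/-- The colour blue. -/
def blue : Fin 3 := 1
/-- The colour green. -/
def green : Fin 3 := 2

variable {V : Type*} (T : CTournament V)

/-- `x` monochromatically dominates `y` in colour `c`: there is a directed
path (with at least one edge) from `x` to `y` all of whose edges have
colour `c`. -/
def Dom (c : Fin 3) (x y : V) : Prop :=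
  Relation.TransGen (fun a b => T.beats a b ∧ T.colour a b = c) x y

/-- `x` monochromatically dominates `y` (in some colour). -/
def MDom (x y : V) : Prop := ∃ c, T.Dom c x y

/-- `x` monochromatically dominates `y` in colour `c` within the
subtournament induced on the vertex set `S`. -/
def DomIn (S : Set V) (c : Fin 3) (x y : V) : Prop :=
  Relation.TransGen (fun a b => a ∈ S ∧ b ∈ S ∧ T.beats a b ∧ T.colour a b = c) x y

/-- `x` monochromatically dominates `y` within the subtournament induced on `S`. -/
def MDomIn (S : Set V) (x y : V) : Prop := ∃ c, T.DomIn S c x y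

/-- `T` contains a `T_3`: three vertices spanning a cyclic triangle whose
three edges have three pairwise distinct colours. -/
def HasT3 : Prop :=
  ∃ a b c : V, T.beats a b ∧ T.beats b c ∧ T.beats c a ∧
    T.colour a b ≠ T.colour b c ∧ T.colour b c ≠ T.colour c a ∧
    T.colour a b ≠ T.colour c a

/-- Vertex `v` is incident with an edge of colour `c`. -/
def IncidentColour (v : V) (c : Fin 3) : Prop :=
  ∃ w, (T.beats v w ∧ T.colour v w = c) ∨ (T.beats w v ∧ T.colour w v = c)

/-- `T` is a minimal counterexample: it contains no `T_3`, no vertex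
monochromatically dominates every other vertex, and every proper nonempty
subset of the vertices spans a subtournament containing a vertex that
monochromatically dominates (within that subtournament) every other vertex
of the subset. -/
def MinimalCex : Prop :=
  ¬ T.HasT3 ∧
  (¬ ∃ x : V, ∀ y, y ≠ x → T.MDom x y) ∧
  ∀ S : Set V, S.Nonempty → S ≠ Set.univ →
    ∃ x ∈ S, ∀ y ∈ S, y ≠ x → T.MDomIn S x y

/-- The permutation `σ` (sending every vertex to its successor) is a directed
Hamilton cycle of `T`: every vertex beats its successor, and all vertices lie
on a single cycle of `σ`. -/
def IsHamCycle (σ : Equiv.Perm V) : Prop :=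
  (∀ v, T.beats v (σ v)) ∧ ∀ v w : V, ∃ n : ℕ, (⇑σ)^[n] v = w

/-- The domination property of the Hamilton cycle `σ`: every vertex
monochromatically dominates every vertex other than itself and its
predecessor on the cycle, and no vertex monochromatically dominates its
predecessor. -/
def HamDomProp (σ : Equiv.Perm V) : Prop :=
  (∀ x y : V, y ≠ x → y ≠ σ.symm x → T.MDom x y) ∧
  ∀ x : V, ¬ T.MDom x (σ.symm x)

/-- The vertex set of the directed subpath `xCy` of the Hamilton cycle whose
successor permutation is `σ`: all vertices reachable from `x` along the cycle
no later than the first visit of `y`. -/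
def PathSet (σ : Equiv.Perm V) (x y : V) : Set V :=
  {z | ∃ k : ℕ, (⇑σ)^[k] x = z ∧ ∀ j < k, (⇑σ)^[j] x ≠ y}

/-- `R^+(x)`: the vertices to which `x` sends a red edge. -/
def Rplus (x : V) : Set V := {v | T.beats x v ∧ T.colour x v = red}
/-- `R^-(x)`: the vertices from which `x` receives a red edge. -/
def Rminus (x : V) : Set V := {v | T.beats v x ∧ T.colour v x = red}
/-- `B^+(x)`: the vertices to which `x` sends a blue edge. -/
def Bplus (x : V) : Set V := {v | T.beats x v ∧ T.colour x v = blue}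
/-- `B^-(x)`: the vertices from which `x` receives a blue edge. -/
def Bminus (x : V) : Set V := {v | T.beats v x ∧ T.colour v x = blue}
/-- `R_r^+(x) = {v ∈ R^+(x) : v monochromatically dominates x in red}`. -/
def Rrplus (x : V) : Set V := {v ∈ T.Rplus x | T.Dom red v x}
/-- `R_r^-(x) = {v ∈ R^-(x) : x monochromatically dominates v in red}`. -/
def Rrminus (x : V) : Set V := {v ∈ T.Rminus x | T.Dom red x v}
/-- `B_b^+(x) = {v ∈ B^+(x) : v monochromatically dominates x in blue}`. -/
def Bbplus (x : V) : Set V := {v ∈ T.Bplus x | T.Dom blue v x}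
/-- `B_b^-(x) = {v ∈ B^-(x) : x monochromatically dominates v in blue}`. -/
def Bbminus (x : V) : Set V := {v ∈ T.Bminus x | T.Dom blue x v}

end CTournament

theorem CTournament.mdom_of_mdomIn {V : Type*} (T : CTournament V) {S : Set V} {x y : V}
    (h : T.MDomIn S x y) : T.MDom x y := by
  obtain ⟨c, hc⟩ := h
  refine ⟨c, ?_⟩
  unfold CTournament.Dom
  induction hc with
  | single hab => exact .single ⟨hab.2.2.1, hab.2.2.2⟩
  | tail _ hab ih => exact ih.tail ⟨hab.2.2.1, hab.2.2.2⟩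

/-- If `D` is a 3-coloured tournament in which every vertex is
incident with at most two of the three colours, which contains no `T_3`, in which
no vertex monochromatically dominates every other vertex, and every proper
nonempty vertex subset spans a subtournament with a vertex dominating it, then
`D` has a directed Hamilton cycle with the stated domination property. -/
theorem hamilton_of_counterexample {V : Type*} [Fintype V] (T : CTournament V)
    (hcol : ∀ v : V, ∃ c : Fin 3, ¬ T.IncidentColour v c)
    (hT3 : ¬ T.HasT3)
    (hdom : ¬ ∃ x : V, ∀ y, y ≠ x → T.MDom x y)
    (hmin : ∀ S : Set V, S.Nonempty → S ≠ Set.univ →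
      ∃ x ∈ S, ∀ y ∈ S, y ≠ x → T.MDomIn S x y) :
    ∃ σ : Equiv.Perm V, T.IsHamCycle σ ∧ T.HamDomProp σ := by
  classical
  cases isEmpty_or_nonempty V with
  | inl hV =>
    exact ⟨1, ⟨fun v => (IsEmpty.false v).elim, fun v => (IsEmpty.false v).elim⟩,
      ⟨fun x => (IsEmpty.false x).elim, fun x => (IsEmpty.false x).elim⟩⟩
  | inr hV =>
    have key : ∀ v : V, ∃ x : V, T.beats v x ∧ ¬ T.MDom x v ∧ x ≠ v ∧
        ∀ y : V, y ≠ v → y ≠ x → T.MDom x y := by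
      intro v
      have hy0 : ∃ y : V, y ≠ v := by
        by_contra h
        push_neg at h
        exact hdom ⟨v, fun y hy => absurd (h y) hy⟩
      obtain ⟨y0, hy0⟩ := hy0
      obtain ⟨x, hxS, hx⟩ := hmin ({v}ᶜ : Set V)
        ⟨y0, Set.mem_compl_singleton_iff.mpr hy0⟩
        (fun h => (Set.mem_compl_singleton_iff.mp (h ▸ Set.mem_univ v)) rfl)
      have hxv : x ≠ v := Set.mem_compl_singleton_iff.mp hxS
      have hmd : ∀ y : V, y ≠ v → y ≠ x → T.MDom x y := fun y hyv hyx =>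
        T.mdom_of_mdomIn (hx y (Set.mem_compl_singleton_iff.mpr hyv) hyx)
      have hnxv : ¬ T.MDom x v := by
        intro hmdxv
        exact hdom ⟨x, fun y hy => by
          by_cases h : y = v
          · exact h ▸ hmdxv
          · exact hmd y h hy⟩
      have hbvx : T.beats v x := by
        rcases T.total v x hxv.symm with h | h
        · exact h
        · exact absurd ⟨T.colour x v, Relation.TransGen.single ⟨h, rfl⟩⟩ hnxv
      exact ⟨x, hbvx, hnxv, hxv, hmd⟩
    choose f hb hnd hne hmd using key
    obtain ⟨i, j, hij, hfij⟩ :=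
      Finite.exists_ne_map_eq_of_infinite (fun k : ℕ => f^[k] (Classical.arbitrary V))
    wlog hlt : i < j generalizing i j
    · exact this j i hij.symm hfij.symm ((Ne.lt_or_gt hij).resolve_left hlt)
    set v0 := Classical.arbitrary V with hv0
    set u := f^[i] v0 with hu
    set p := j - i with hpdef
    have hp : 0 < p := Nat.sub_pos_of_lt hlt
    have hfp : f^[p] u = u := by
      have : p + i = j := Nat.sub_add_cancel hlt.le
      rw [hu, ← Function.iterate_add_apply, this]
      exact hfij.symm
    have hmult : ∀ a : ℕ, f^[a * p] u = u := by
      intro a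
      induction a with
      | zero => simpa using rfl
      | succ n ih =>
        rw [Nat.succ_mul, Function.iterate_add_apply, hfp, ih]
    have hp1 : p - 1 + 1 = p := Nat.succ_pred_eq_of_pos hp
    have hU : ∀ w : V, ∃ k : ℕ, f^[k] u = w := by
      by_contra h
      push_neg at h
      obtain ⟨w, hw⟩ := h
      set U : Set V := Set.range (fun k : ℕ => f^[k] u) with hUdef
      have hUne : U.Nonempty := ⟨u, 0, rfl⟩
      have hUuniv : U ≠ Set.univ := by
        intro h'
        obtain ⟨k, hk⟩ := (h' ▸ Set.mem_univ w : w ∈ U)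
        exact hw k hk
      obtain ⟨x, hxU, hx⟩ := hmin U hUne hUuniv
      obtain ⟨k, hk⟩ := hxU
      set y : V := if k = 0 then f^[p-1] u else f^[k-1] u with hy
      have hfy : f y = x := by
        by_cases h0 : k = 0
        · have h1 : f (f^[p-1] u) = f^[p-1+1] u :=
            (Function.iterate_succ_apply' f (p-1) u).symm
          rw [hy, if_pos h0, h1, hp1, hfp]
          rw [h0] at hk
          exact hk
        · have hk1 : k - 1 + 1 = k := Nat.succ_pred_eq_of_pos (Nat.pos_of_ne_zero h0)
          have h1 : f (f^[k-1] u) = f^[k-1+1] u :=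
            (Function.iterate_succ_apply' f (k-1) u).symm
          rw [hy, if_neg h0, h1, hk1]
          exact hk
      have hyU : y ∈ U := by
        by_cases h0 : k = 0
        · rw [hy, if_pos h0]; exact ⟨p - 1, rfl⟩
        · rw [hy, if_neg h0]; exact ⟨k - 1, rfl⟩
      have hyx : y ≠ x := by
        intro h
        exact hne y (by rw [hfy, h])
      exact hnd y (hfy ▸ T.mdom_of_mdomIn (hx y hyU hyx))
    have hsurj : Function.Surjective f := by
      intro w
      obtain ⟨k, hk⟩ := hU w
      cases k with
      | zero =>
        refine ⟨f^[p-1] u, ?_⟩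
        have h1 : f (f^[p-1] u) = f^[p-1+1] u :=
          (Function.iterate_succ_apply' f (p-1) u).symm
        rw [h1, hp1, hfp]
        exact hk
      | succ n =>
        refine ⟨f^[n] u, ?_⟩
        have h1 : f (f^[n] u) = f^[n+1] u :=
          (Function.iterate_succ_apply' f n u).symm
        rw [h1]
        exact hk
    have hbij : Function.Bijective f := ⟨Finite.injective_iff_surjective.mpr hsurj, hsurj⟩
    refine ⟨Equiv.ofBijective f hbij, ⟨fun v => hb v, ?_⟩, ?_, ?_⟩
    · intro v w
      have hcoe : ⇑(Equiv.ofBijective f hbij) = f := rfl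
      obtain ⟨a, ha⟩ := hU v
      obtain ⟨b, hb'⟩ := hU w
      refine ⟨a * (p - 1) + b, ?_⟩
      rw [hcoe, ← ha, ← Function.iterate_add_apply]
      have h2 : a * p = a * (p - 1) + a := by
        conv_lhs => rw [← hp1]
        ring
      have harith : a * (p - 1) + b + a = b + a * p := by
        rw [h2]; ring
      rw [harith, Function.iterate_add_apply, hmult a]
      exact hb'
    · intro x y hyx hys
      have hs : f ((Equiv.ofBijective f hbij).symm x) = x :=
        (Equiv.ofBijective f hbij).apply_symm_apply x
      have := hmd ((Equiv.ofBijective f hbij).symm x) y hys (by rw [hs]; exact hyx)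
      rwa [hs] at this
    · intro x
      have hs : f ((Equiv.ofBijective f hbij).symm x) = x :=
        (Equiv.ofBijective f hbij).apply_symm_apply x
      have := hnd ((Equiv.ofBijective f hbij).symm x)
      rwa [hs] at this
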